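/- Let Ã : (0,∞) → ℝ be twice continuously differentiable with Ã''(y) = −((y²/16) Ã(y) + (y/4) Ã(y)³ + (3/16) Ã(y)⁵) for all y > 0, and define E₁(y) = (1/2) Ã'(y)² + (y²/32) Ã(y)² + (y/16) Ã(y)⁴ + (1/32) Ã(y)⁶. Then for every y > 0 the function y ↦ E₁(y)/y² is differentiable with (d/dy)(E₁(y)/y²) = −Ã'(y)²/y³ − Ã(y)⁴/(16 y²) − Ã(y)⁶/(16 y³); in particular y ↦ E₁(y)/y² is nonincreasing on (0,∞). -/

import Mathlib

/-- For a C² solution of the reflected amplitude equation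
`Ã'' = −((y²/16) Ã + (y/4) Ã³ + (3/16) Ã⁵)` on `(0,∞)` and the modified energy
`E₁ = (1/2) Ã'² + (y²/32) Ã² + (y/16) Ã⁴ + (1/32) Ã⁶`, the function `E₁/y²` has
derivative `−Ã'²/y³ − Ã⁴/(16y²) − Ã⁶/(16y³)` at each `y > 0`; in particular `E₁/y²` is
nonincreasing on `(0,∞)`. -/
theorem stmt_10 (A : ℝ → ℝ) (hA : ContDiffOn ℝ 2 A (Set.Ioi (0 : ℝ)))
    (hODE : ∀ y : ℝ, 0 < y →
      deriv (deriv A) y = -(y ^ 2 / 16 * A y + y / 4 * A y ^ 3 + 3 / 16 * A y ^ 5)) :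
    (∀ y : ℝ, 0 < y →
      HasDerivAt
        (fun z : ℝ =>
          (1 / 2 * deriv A z ^ 2 + z ^ 2 / 32 * A z ^ 2 + z / 16 * A z ^ 4
            + 1 / 32 * A z ^ 6) / z ^ 2)
        (-(deriv A y ^ 2) / y ^ 3 - A y ^ 4 / (16 * y ^ 2) - A y ^ 6 / (16 * y ^ 3)) y) ∧
    AntitoneOn
      (fun z : ℝ =>
        (1 / 2 * deriv A z ^ 2 + z ^ 2 / 32 * A z ^ 2 + z / 16 * A z ^ 4
          + 1 / 32 * A z ^ 6) / z ^ 2)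
      (Set.Ioi (0 : ℝ)) := by
  have hopen : IsOpen (Set.Ioi (0 : ℝ)) := isOpen_Ioi
  have key : ∀ y : ℝ, 0 < y →
      HasDerivAt
        (fun z : ℝ =>
          (1 / 2 * deriv A z ^ 2 + z ^ 2 / 32 * A z ^ 2 + z / 16 * A z ^ 4
            + 1 / 32 * A z ^ 6) / z ^ 2)
        (-(deriv A y ^ 2) / y ^ 3 - A y ^ 4 / (16 * y ^ 2) - A y ^ 6 / (16 * y ^ 3)) y := by
    intro y hy
    have hmem : y ∈ Set.Ioi (0 : ℝ) := hy
    have hnhds : Set.Ioi (0 : ℝ) ∈ nhds y := hopen.mem_nhds hmem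
    have hA1 : ∀ z ∈ Set.Ioi (0 : ℝ), HasDerivAt A (deriv A z) z := by
      intro z hz
      exact ((hA.contDiffAt (hopen.mem_nhds hz)).differentiableAt
        (by norm_num)).hasDerivAt
    have hA' : ContDiffOn ℝ 1 (deriv A) (Set.Ioi (0 : ℝ)) :=
      hA.deriv_of_isOpen (m := 1) hopen (by norm_num)
    have hA2 : HasDerivAt (deriv A) (deriv (deriv A) y) y :=
      ((hA'.contDiffAt hnhds).differentiableAt one_ne_zero).hasDerivAt
    -- derivative of the numerator
    have hAy : HasDerivAt A (deriv A y) y := hA1 y hy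
    have hnum : HasDerivAt
        (fun z : ℝ => 1 / 2 * deriv A z ^ 2 + z ^ 2 / 32 * A z ^ 2 + z / 16 * A z ^ 4
          + 1 / 32 * A z ^ 6)
        (y / 16 * A y ^ 2 + 1 / 16 * A y ^ 4) y := by
      have h1 := (hA2.pow 2).const_mul (1/2 : ℝ)
      have h2 := ((hasDerivAt_pow 2 y).div_const 32).mul (hAy.pow 2)
      have h3 := ((hasDerivAt_id y).div_const 16).mul (hAy.pow 4)
      simp only [id_eq] at h3
      have h4 := (hAy.pow 6).const_mul (1/32 : ℝ)
      have := ((h1.add h2).add h3).add h4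
      refine this.congr_deriv ?_
      rw [hODE y hy]
      push_cast [Pi.pow_apply]
      ring
    have hden : HasDerivAt (fun z : ℝ => z ^ 2) (2 * y) y := by
      simpa using hasDerivAt_pow 2 y
    have hne : y ^ 2 ≠ 0 := by positivity
    have := hnum.div hden hne
    refine this.congr_deriv ?_
    field_simp
    ring
  refine ⟨key, ?_⟩
  apply antitoneOn_of_deriv_nonpos (convex_Ioi 0)
  · intro x hx
    exact ((key x hx).differentiableAt).continuousAt.continuousWithinAt
  · intro x hx
    rw [interior_Ioi] at hx
    exact ((key x hx).differentiableAt).differentiableWithinAt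
  · intro x hx
    rw [interior_Ioi] at hx
    rw [(key x hx).deriv]
    have hx0 : (0:ℝ) < x := hx
    have h1 : 0 ≤ deriv A x ^ 2 / x ^ 3 := by positivity
    have h2 : 0 ≤ A x ^ 4 / (16 * x ^ 2) := by positivity
    have h3 : 0 ≤ A x ^ 6 / (16 * x ^ 3) := by positivity
    have : -(deriv A x ^ 2) / x ^ 3 = -(deriv A x ^ 2 / x ^ 3) := by ring
    linarith [this]
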